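/- arXiv:1305.7164 — 2 statements merged into one kernel-verified Lean document; each statement's English description precedes it below -/
import Mathlib

section
/- Q̂ is semiconjugate to the doubling map via the extended exponential: Q̂(Exp̂(x, y, t)) = Exp̂(2x, 2y, 2t) for all (x, y, t) ∈ ℝ³. -/
set_option maxHeartbeats 1000000


/-- The extended exponential map on the upper half-space model. -/
noncomputable def ExpHat (p : ℝ × ℝ × ℝ) : ℝ × ℝ × ℝ :=
  (2 * Real.exp p.2.2 * Real.cos p.2.1 / (1 + Real.exp (2 * p.2.2)) * Real.exp p.1,
   2 * Real.exp p.2.2 * Real.sin p.2.1 / (1 + Real.exp (2 * p.2.2)) * Real.exp p.1,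
   (Real.exp (2 * p.2.2) - 1) / (1 + Real.exp (2 * p.2.2)) * Real.exp p.1)

/-- The Euclidean norm on `ℝ × ℝ × ℝ`. -/
noncomputable def enorm3 (p : ℝ × ℝ × ℝ) : ℝ :=
  Real.sqrt (p.1 ^ 2 + p.2.1 ^ 2 + p.2.2 ^ 2)

/-- The Poincaré extension of the squaring map to the upper half-space. -/
noncomputable def QHat (p : ℝ × ℝ × ℝ) : ℝ × ℝ × ℝ :=
  ((p.1 ^ 2 + p.2.1 ^ 2 + p.2.2 ^ 2) * (p.1 ^ 2 - p.2.1 ^ 2) /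
      ((p.1 ^ 2 + p.2.1 ^ 2 + p.2.2 ^ 2) + p.2.2 ^ 2),
   (p.1 ^ 2 + p.2.1 ^ 2 + p.2.2 ^ 2) * (2 * p.1 * p.2.1) /
      ((p.1 ^ 2 + p.2.1 ^ 2 + p.2.2 ^ 2) + p.2.2 ^ 2),
   (p.1 ^ 2 + p.2.1 ^ 2 + p.2.2 ^ 2) *
      (2 * p.2.2 * Real.sqrt (p.1 ^ 2 + p.2.1 ^ 2 + p.2.2 ^ 2)) /
      ((p.1 ^ 2 + p.2.1 ^ 2 + p.2.2 ^ 2) + p.2.2 ^ 2))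

/-- `QHat` is semiconjugate to the doubling map via the extended exponential. -/
theorem qHat_semiconj (x y t : ℝ) :
    QHat (ExpHat (x, y, t)) = ExpHat (2 * x, 2 * y, 2 * t) := by
  have hc := Real.sin_sq_add_cos_sq y
  have hEpos := Real.exp_pos t
  have hXpos := Real.exp_pos x
  have hE : Real.exp (2*t) = Real.exp t ^ 2 := by rw [two_mul, Real.exp_add]; ring
  have hE4 : Real.exp (2*(2*t)) = Real.exp t ^ 4 := by
    rw [show 2*(2*t) = (2*t)+(2*t) by ring, Real.exp_add, hE]; ring
  have hX : Real.exp (2*x) = Real.exp x ^ 2 := by rw [two_mul, Real.exp_add]; ring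
  have hcos : Real.cos (2*y) = Real.cos y ^ 2 - Real.sin y ^ 2 := Real.cos_two_mul' y
  have hsin : Real.sin (2*y) = 2 * Real.sin y * Real.cos y := Real.sin_two_mul y
  have hden : (1 : ℝ) + Real.exp t ^ 2 ≠ 0 := by positivity
  have hden4 : (1 : ℝ) + Real.exp t ^ 4 ≠ 0 := by positivity
  simp only [QHat, ExpHat, hE, hE4, hX, hcos, hsin]
  set E := Real.exp t
  set X := Real.exp x
  set s := Real.sin y
  set c := Real.cos y
  have hS : (2 * E * c / (1 + E ^ 2) * X) ^ 2 +
      (2 * E * s / (1 + E ^ 2) * X) ^ 2 +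
      ((E ^ 2 - 1) / (1 + E ^ 2) * X) ^ 2 = X ^ 2 := by
    field_simp
    linear_combination (4 * E^2) * hc
  rw [hS, Real.sqrt_sq hXpos.le]
  have hXne := hXpos.ne'
  refine Prod.ext ?_ (Prod.ext ?_ ?_) <;> simp only
  · field_simp
    nlinarith [hc, sq_nonneg E, sq_nonneg X]
  · field_simp
    ring
  · field_simp
    nlinarith [hc, sq_nonneg E, sq_nonneg X]
end

section
/- Every sphere centered at the origin is invariant in the following sense under Q̂: Q̂ maps the sphere of radius r > 0 (intersected with the upper half-space) into the sphere of radius r². Consequently the family of hemispheres centered at the origin is a Q̂-invariant foliation of the upper half-space minus the origin, with the unit hemisphere mapped to itself. -/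
/-- `QHat` maps the upper hemisphere of radius `r` into the sphere of radius
`r²`, preserving the upper half-space; in particular the unit hemisphere is
mapped to itself. -/
theorem qHat_spheres (r : ℝ) (hr : 0 < r) (p : ℝ × ℝ × ℝ)
    (hp : enorm3 p = r) (ht : 0 ≤ p.2.2) :
    enorm3 (QHat p) = r ^ 2 ∧ 0 ≤ (QHat p).2.2 := by
  obtain ⟨x, y, t⟩ := p
  simp only [enorm3, QHat] at *
  have hs : x ^ 2 + y ^ 2 + t ^ 2 = r ^ 2 := by
    have := Real.sq_sqrt (by positivity : (0:ℝ) ≤ x ^ 2 + y ^ 2 + t ^ 2)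
    rw [hp] at this; linarith
  rw [hs]
  have hsq : Real.sqrt (r ^ 2) = r := Real.sqrt_sq hr.le
  rw [hsq]
  have hd : (0:ℝ) < r ^ 2 + t ^ 2 := by positivity
  constructor
  · have key : (r ^ 2 * (x ^ 2 - y ^ 2) / (r ^ 2 + t ^ 2)) ^ 2 +
        (r ^ 2 * (2 * x * y) / (r ^ 2 + t ^ 2)) ^ 2 +
        (r ^ 2 * (2 * t * r) / (r ^ 2 + t ^ 2)) ^ 2 = (r ^ 2) ^ 2 := by
      field_simp
      linear_combination (x ^ 2 + y ^ 2 + r ^ 2 - t ^ 2) * hs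
    rw [key, Real.sqrt_sq (by positivity)]
  · positivity
end
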